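/- The function f(X, Z) = Tr(Xᴴ Z⁻¹ X) is jointly convex in (X, Z) over the set of pairs where X ∈ ℂ^{M×N} and Z ∈ ℂ^{M×M} is Hermitian positive definite. That is, for Z₁, Z₂ ≻ 0, X₁, X₂, and t ∈ [0,1]: Tr((tX₁+(1-t)X₂)ᴴ (tZ₁+(1-t)Z₂)⁻¹ (tX₁+(1-t)X₂)) ≤ t·Tr(X₁ᴴZ₁⁻¹X₁) + (1-t)·Tr(X₂ᴴZ₂⁻¹X₂). -/

import Mathlib

open Matrix
open scoped ComplexOrder

lemma psd_trace_re_nonneg {m : ℕ} {A : Matrix (Fin m) (Fin m) ℂ} (hA : A.PosSemidef) :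
    0 ≤ (A.trace).re := by
  rw [Matrix.trace, Complex.re_sum]
  refine Finset.sum_nonneg fun i _ => ?_
  have h : 0 ≤ A i i := by
    exact hA.diag_nonneg
  exact (Complex.nonneg_iff.mp h).1

lemma psd_smul {m : ℕ} {A : Matrix (Fin m) (Fin m) ℂ} (hA : A.PosSemidef)
    {t : ℝ} (ht : 0 ≤ t) : (t • A).PosSemidef := by
  refine ⟨?_, fun x => ?_⟩
  · show (t • A)ᴴ = t • A
    rw [conjTranspose_smul, star_trivial, hA.1.eq]
  · exact (Matrix.PosSemidef.smul hA ht).2 x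

lemma pd_smul {m : ℕ} {A : Matrix (Fin m) (Fin m) ℂ} (hA : A.PosDef)
    {t : ℝ} (ht : 0 < t) : (t • A).PosDef := by
  refine ⟨?_, fun x hx => ?_⟩
  · show (t • A)ᴴ = t • A
    rw [conjTranspose_smul, star_trivial, hA.1.eq]
  · exact (Matrix.PosDef.smul hA ht).2 hx

/-- Key inequality: for Z posdef, Tr(XᴴY + YᴴX - YᴴZY).re ≤ Tr(Xᴴ Z⁻¹ X).re -/
lemma key {M N : ℕ} (X Y : Matrix (Fin M) (Fin N) ℂ) {Z : Matrix (Fin M) (Fin M) ℂ}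
    (hZ : Z.PosDef) :
    (Matrix.trace (Xᴴ * Y + Yᴴ * X - Yᴴ * Z * Y)).re ≤
      (Matrix.trace (Xᴴ * Z⁻¹ * X)).re := by
  have hdet : IsUnit Z.det := (Matrix.isUnit_iff_isUnit_det Z).mp hZ.isUnit
  have hW : ((X - Z * Y)ᴴ * Z⁻¹ * (X - Z * Y)).PosSemidef :=
    hZ.inv.posSemidef.conjTranspose_mul_mul_same (X - Z * Y)
  have hexp : (X - Z * Y)ᴴ * Z⁻¹ * (X - Z * Y) =
      Xᴴ * Z⁻¹ * X - (Xᴴ * Y + Yᴴ * X - Yᴴ * Z * Y) := by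
    have hH : Zᴴ = Z := hZ.isHermitian.eq
    simp only [conjTranspose_sub, conjTranspose_mul, hH, Matrix.mul_sub, Matrix.sub_mul,
      Matrix.mul_assoc, Matrix.mul_nonsing_inv_cancel_left _ _ hdet,
      Matrix.nonsing_inv_mul_cancel_left _ _ hdet]
    abel
  have h0 := psd_trace_re_nonneg hW
  rw [hexp, trace_sub, Complex.sub_re] at h0
  linarith

/-- The matrix fractional function `f(X, Z) = Tr(Xᴴ Z⁻¹ X)` is jointly convex in
`(X, Z)` with `Z` Hermitian positive definite. -/
theorem stmt_1 {M N : ℕ} (X₁ X₂ : Matrix (Fin M) (Fin N) ℂ)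
    (Z₁ Z₂ : Matrix (Fin M) (Fin M) ℂ) (hZ₁ : Z₁.PosDef) (hZ₂ : Z₂.PosDef)
    (t : ℝ) (ht0 : 0 ≤ t) (ht1 : t ≤ 1) :
    (Matrix.trace ((t • X₁ + (1 - t) • X₂)ᴴ * (t • Z₁ + (1 - t) • Z₂)⁻¹ *
        (t • X₁ + (1 - t) • X₂))).re ≤
      t * (Matrix.trace (X₁ᴴ * Z₁⁻¹ * X₁)).re +
        (1 - t) * (Matrix.trace (X₂ᴴ * Z₂⁻¹ * X₂)).re := by
  set Xc := t • X₁ + (1 - t) • X₂ with hXc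
  set Z := t • Z₁ + (1 - t) • Z₂ with hZdef
  have hZ : Z.PosDef := by
    rcases eq_or_lt_of_le ht1 with h | h
    · subst h
      simpa [hZdef] using (pd_smul hZ₁ one_pos).add_posSemidef (psd_smul hZ₂.posSemidef le_rfl)
    · exact Matrix.PosDef.posSemidef_add (psd_smul hZ₁.posSemidef ht0) (pd_smul hZ₂ (by linarith))
  have hdet : IsUnit Z.det := (Matrix.isUnit_iff_isUnit_det Z).mp hZ.isUnit
  set Y := Z⁻¹ * Xc with hY
  have hZY : Z * Y = Xc := Matrix.mul_nonsing_inv_cancel_left Z Xc hdet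
  have hLHS : (Matrix.trace (Xcᴴ * Z⁻¹ * Xc)).re =
      (Matrix.trace (Xcᴴ * Y + Yᴴ * Xc - Yᴴ * Z * Y)).re := by
    rw [Matrix.mul_assoc Yᴴ Z Y, hZY, add_sub_cancel_right, hY, Matrix.mul_assoc]
  have hsplit : Xcᴴ * Y + Yᴴ * Xc - Yᴴ * Z * Y =
      t • (X₁ᴴ * Y + Yᴴ * X₁ - Yᴴ * Z₁ * Y) +
        (1 - t) • (X₂ᴴ * Y + Yᴴ * X₂ - Yᴴ * Z₂ * Y) := by
    simp only [hXc, hZdef, conjTranspose_add, conjTranspose_smul, star_trivial,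
      Matrix.add_mul, Matrix.mul_add, Matrix.smul_mul, Matrix.mul_smul]
    module
  rw [hLHS, hsplit, trace_add, trace_smul, trace_smul, Complex.add_re]
  have e1 : ∀ (r : ℝ) (c : ℂ), ((r • c).re) = r * c.re := fun r c => by
    simp [Complex.real_smul]
  rw [e1, e1]
  have k1 := key X₁ Y hZ₁
  have k2 := key X₂ Y hZ₂
  have h1 : 0 ≤ 1 - t := by linarith
  exact add_le_add (mul_le_mul_of_nonneg_left k1 ht0) (mul_le_mul_of_nonneg_left k2 h1)
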